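/- The algebra A_n = ⟨A_n; t⟩ is not solvable in dimension n: for every m ∈ ω, [1]_m^n ≠ 0 for the n-ary derived series defined by the n-ary term condition commutator. -/

import Mathlib

/-- The carrier of the algebra `𝔸ₙ = ⟨Aₙ; t⟩`: `O = {o_{i,g}ʲ}` (with
`g : (n-1) → 2`), `R = {rᵢʲ}`, and `G` the set of formal `n`-ary products,
so that `An.gg : Aₙⁿ → G` is a fixed injection `s`. -/
inductive An (n : ℕ) : Type where
  | o (i j : ℕ) (g : Fin (n - 1) → Bool) : An n
  | r (i j : ℕ) : An n
  | gg (a : Fin n → An n) : An n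

open Classical in
/-- The `n`-ary operation `t` of `𝔸ₙ`: on tuples `(r_{4i+ε₀}ʲ, …, r_{4i+ε_{n-1}}ʲ)`
with all `εₖ ∈ {0,2}` it equals `rᵢʲ⁺¹` if `ε₀ = ⋯ = ε_{n-2} = 2, ε_{n-1} = 0`;
`r_{i+1}ʲ⁺¹` if all `εₖ = 2`; and `o_{i,g}ʲ` with `g(k) = εₖ/2` otherwise.
On all other tuples it is the fixed injection `s` into `G`. -/
noncomputable def tOp (n : ℕ) (a : Fin n → An n) : An n :=
  if hpos : 0 < n then
    if h : ∃ p : ℕ × ℕ, ∀ k : Fin n,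
        a k = An.r (4 * p.1) p.2 ∨ a k = An.r (4 * p.1 + 2) p.2 then
      let i := h.choose.1
      let j := h.choose.2
      if ∀ k : Fin n, (k : ℕ) < n - 1 → a k = An.r (4 * i + 2) j then
        if a ⟨n - 1, by omega⟩ = An.r (4 * i) j then An.r i (j + 1)
        else An.r (i + 1) (j + 1)
      else
        An.o i j (fun k =>
          if a ⟨k.1, by have := k.isLt; omega⟩ = An.r (4 * i + 2) j then true
          else false)
    else An.gg a
  else An.gg a

/-- `x ∈ R`. -/
def An.inR {n : ℕ} (x : An n) : Prop := ∃ i j : ℕ, x = An.r i j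

/-- `x ∈ O`. -/
def An.inO {n : ℕ} (x : An n) : Prop := ∃ (i j : ℕ) (g : Fin (n - 1) → Bool), x = An.o i j g

/-- A congruence of `𝔸ₙ`: an equivalence relation compatible with `t`. -/
def IsConN (n : ℕ) (θ : An n → An n → Prop) : Prop :=
  Equivalence θ ∧
    ∀ x y : Fin n → An n, (∀ k, θ (x k) (y k)) → θ (tOp n x) (tOp n y)

/-- `M(θ₀,…,θ_{n-1})`: the subalgebra of `𝔸ₙ^(2ⁿ)` generated by the cubes
`γᵢⁿ(x,y)` for `(x,y) ∈ θᵢ`, `i ∈ n`. -/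
inductive MN (n : ℕ) (θ : Fin n → (An n → An n → Prop)) :
    ((Fin n → Bool) → An n) → Prop where
  | gen (i : Fin n) (x y : An n) (hxy : θ i x y) :
      MN n θ (fun f => if f i then y else x)
  | app (c : Fin n → (Fin n → Bool) → An n) (hc : ∀ k, MN n θ (c k)) :
      MN n θ (fun f => tOp n (fun k => c k f))

/-- Centrality: for every `h ∈ M(θ₀,…,θ_{n-1})`, if all `(n-1)`-support lines
of `h` are `δ`-pairs then so is the `(n-1)`-pivot line. -/
def CenN (n : ℕ) (hn : 0 < n) (θ : Fin n → (An n → An n → Prop))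
    (δ : An n → An n → Prop) : Prop :=
  ∀ h : (Fin n → Bool) → An n, MN n θ h →
    (∀ f : Fin n → Bool, (∃ k : Fin n, k ≠ ⟨n - 1, by omega⟩ ∧ f k = false) →
      δ (h (Function.update f ⟨n - 1, by omega⟩ false))
        (h (Function.update f ⟨n - 1, by omega⟩ true))) →
    δ (h (Function.update (fun _ => true) (⟨n - 1, by omega⟩ : Fin n) false))
      (h (fun _ => true))

/-- The `n`-ary term condition commutator: the least congruence `δ` such that
the centrality condition holds. -/
def commN (n : ℕ) (hn : 0 < n) (θ : Fin n → (An n → An n → Prop)) :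
    An n → An n → Prop :=
  fun a b => ∀ δ : An n → An n → Prop, IsConN n δ → CenN n hn θ δ → δ a b

/-- The `n`-ary derived series `[1]₀ⁿ = 1`, `[1]_{j+1}ⁿ = [[1]_jⁿ,…,[1]_jⁿ]`. -/
def dserN (n : ℕ) (hn : 0 < n) : ℕ → An n → An n → Prop
  | 0 => fun _ _ => True
  | j + 1 => commN n hn (fun _ => dserN n hn j)

open Classical in
lemma tOp_spec (n : ℕ) (hn : 2 ≤ n) (i j : ℕ) (a : Fin n → An n)
    (ha : ∀ k, a k = An.r (4*i) j ∨ a k = An.r (4*i+2) j) :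
    tOp n a =
      if (∀ k : Fin n, (k : ℕ) < n - 1 → a k = An.r (4*i+2) j) then
        (if a ⟨n - 1, by omega⟩ = An.r (4*i) j then An.r i (j+1)
         else An.r (i+1) (j+1))
      else An.o i j (fun k =>
        if a ⟨k.1, by have := k.isLt; omega⟩ = An.r (4*i+2) j then true
        else false) := by
  have hpos : 0 < n := by omega
  have hex : ∃ p : ℕ × ℕ, ∀ k : Fin n,
      a k = An.r (4 * p.1) p.2 ∨ a k = An.r (4 * p.1 + 2) p.2 := ⟨(i, j), ha⟩
  have hc1 : hex.choose.1 = i ∧ hex.choose.2 = j := by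
    have hs := hex.choose_spec ⟨0, hpos⟩
    have h0 := ha ⟨0, hpos⟩
    rcases hs with h | h <;> rcases h0 with h' | h' <;> rw [h'] at h <;>
      injection h with e1 e2 <;> constructor <;> omega
  unfold tOp
  rw [dif_pos hpos, dif_pos hex]
  simp only [hc1.1, hc1.2]

lemma dser_r (n : ℕ) (hn : 2 ≤ n) :
    ∀ m i i', dserN n (Nat.lt_of_lt_of_le (by decide) hn) m (An.r i m) (An.r i' m) := by
  intro m
  induction m with
  | zero => intro i i'; trivial
  | succ m ih =>
    -- first, the basic step `δ (r i (m+1)) (r (i+1) (m+1))`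
    intro i i'
    intro δ hδ hcen
    have hpos : 0 < n := by omega
    have hr42 : ∀ i₀, (An.r (4*i₀) m : An n) ≠ An.r (4*i₀+2) m := by
      intro i₀ h; injection h with e1 e2; omega
    have key : ∀ i₀ : ℕ, δ (An.r i₀ (m+1)) (An.r (i₀+1) (m+1)) := by
      intro i₀
      set last : Fin n := ⟨n - 1, by omega⟩ with hlast
      set c : Fin n → (Fin n → Bool) → An n :=
        fun k f => if f k then An.r (4*i₀+2) m else An.r (4*i₀) m with hcdef
      have hM : MN n (fun _ => dserN n (Nat.lt_of_lt_of_le (by decide) hn) m)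
          (fun f => tOp n (fun k => c k f)) := by
        apply MN.app
        intro k
        exact MN.gen k (An.r (4*i₀) m) (An.r (4*i₀+2) m) (ih (4*i₀) (4*i₀+2))
      have hmem : ∀ f : Fin n → Bool, ∀ k, c k f = An.r (4*i₀) m ∨ c k f = An.r (4*i₀+2) m := by
        intro f k
        by_cases h : f k <;> simp [hcdef, h]
      have hline := hcen _ hM ?_
      · -- compute the pivot line
        have e1 : tOp n (fun k => c k (Function.update (fun _ => true) last false))
            = An.r i₀ (m+1) := by
          rw [tOp_spec n hn i₀ m _ (hmem _)]
          rw [if_pos, if_pos]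
          · have : Function.update (fun _ : Fin n => true) last false last = false := by
              simp
            simp [hcdef, this]; exact this
          · intro k hk
            have hk' : k ≠ last := by
              intro h; rw [h] at hk; simp [hlast] at hk
            have : Function.update (fun _ : Fin n => true) last false k = true := by
              simp [Function.update_of_ne hk']
            simp [hcdef, this]
        have e2 : tOp n (fun k => c k (fun _ => true)) = An.r (i₀+1) (m+1) := by
          rw [tOp_spec n hn i₀ m _ (hmem _)]
          rw [if_pos, if_neg]
          · simp only [hcdef, if_pos rfl]
            exact fun h => hr42 i₀ h.symm
          · intro k hk; simp [hcdef]
        rw [e1, e2] at hline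
        exact hline
      · -- support lines are trivial
        intro f ⟨k0, hk0ne, hk0f⟩
        have hk0lt : (k0 : ℕ) < n - 1 := by
          have := k0.isLt
          rcases Nat.lt_or_ge (k0 : ℕ) (n-1) with h | h
          · exact h
          · exfalso; apply hk0ne; apply Fin.ext; simp [hlast]; omega
        have hcond : ∀ b : Bool,
            ¬ (∀ k : Fin n, (k : ℕ) < n - 1 →
              (fun k => c k (Function.update f last b)) k = An.r (4*i₀+2) m) := by
          intro b hall
          have := hall k0 hk0lt
          have hne : k0 ≠ last := hk0ne
          have hup : Function.update f last b k0 = f k0 :=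
            Function.update_of_ne hne _ _
          simp only [hcdef, hup, hk0f, if_neg Bool.false_ne_true] at this
          exact hr42 i₀ this
        have eo : ∀ b : Bool,
            tOp n (fun k => c k (Function.update f last b))
            = An.o i₀ m (fun k : Fin (n-1) =>
                if f ⟨k.1, by have := k.isLt; omega⟩ then true else false) := by
          intro b
          rw [tOp_spec n hn i₀ m _ (hmem _)]
          rw [if_neg (hcond b)]
          congr 1
          funext k
          have hkne : (⟨k.1, by have := k.isLt; omega⟩ : Fin n) ≠ last := by
            intro h
            have := congrArg Fin.val h
            simp [hlast] at this
            have := k.isLt; omega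
          have hup : Function.update f last b ⟨k.1, by have := k.isLt; omega⟩
              = f ⟨k.1, by have := k.isLt; omega⟩ := Function.update_of_ne hkne _ _
          by_cases hfk : f ⟨k.1, by have := k.isLt; omega⟩ <;>
            simp [hcdef, hup, hfk, hr42 i₀]
        rw [eo false, eo true]
        exact hδ.1.refl _
    -- now chain the basic steps
    have chain : ∀ d i₀, δ (An.r i₀ (m+1)) (An.r (i₀+d) (m+1)) := by
      intro d
      induction d with
      | zero => intro i₀; exact hδ.1.refl _
      | succ d ihd =>
        intro i₀
        have := hδ.1.trans (key i₀) (ihd (i₀+1))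
        simpa [Nat.add_comm, Nat.add_assoc, Nat.add_left_comm] using this
    rcases Nat.le_total i i' with h | h
    · have := chain (i' - i) i
      rwa [Nat.add_sub_cancel' h] at this
    · have := chain (i - i') i'
      rw [Nat.add_sub_cancel' h] at this
      exact hδ.1.symm this

/-- `𝔸ₙ` is not solvable in dimension `n`: no term of the `n`-ary derived
series is the trivial (equality) congruence. -/
theorem stmt12 (n : ℕ) (hn : 2 ≤ n) :
    ∀ m : ℕ, ¬ (∀ a b : An n, dserN n (by omega) m a b → a = b) := by
  intro m heq
  have h := heq _ _ (dser_r n hn m 0 1)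
  injection h with e1 e2
  omega
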